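/- Let C₁, …, C_N be closed affine subspaces of a real Hilbert space H with projections P₁, …, P_N, and define the cyclic projection orbit from a starting point x⁰ by x₁¹ := P₁(x⁰), x_i¹ := P_i(x_{i−1}¹), x₁ⁿ⁺¹ := P₁(x_Nⁿ), x_iⁿ⁺¹ := P_i(x_{i−1}ⁿ⁺¹), and the composite operators Q_i := P_i ∘ P_{i−1} ∘ ⋯ ∘ P₁ ∘ P_N ∘ ⋯ ∘ P_{i+1}, so that x_iⁿ = Q_i^{n−1}(x_i¹). Suppose each Q_i has a fixed point. Then for each i the sequence (x_iⁿ)ₙ converges in norm to the fixed point of Q_i nearest to x⁰, i.e. to the projection of x⁰ onto the fixed point set Fix Q_i. -/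

import Mathlib

open Filter

/-- `P` is the metric (nearest-point) projection onto the set `C`. -/
def IsProjOn {H : Type*} [NormedAddCommGroup H] (P : H → H) (C : Set H) : Prop :=
  ∀ x : H, P x ∈ C ∧ ∀ y ∈ C, ‖x - P x‖ ≤ ‖x - y‖

/-- The composite operator `Q_i = P_i ∘ P_{i-1} ∘ ⋯ ∘ P₁ ∘ P_N ∘ ⋯ ∘ P_{i+1}`
(`0`-based: first `P (i+1)` is applied, then `P (i+2)`, …, and `P i` last,
with indices modulo `N`). -/
def cycOp {H : Type*} {N : ℕ} [NeZero N] (P : Fin N → H → H) (i : Fin N) : H → H :=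
  fun x => (List.ofFn fun j : Fin N => P (i + 1 + j)).foldl (fun y f => f y) x

def applyList {H : Type*} (l : List (H → H)) (x : H) : H := l.foldl (fun y f => f y) x

@[simp] lemma applyList_nil {H : Type*} (x : H) : applyList ([] : List (H → H)) x = x := rfl

@[simp] lemma applyList_cons {H : Type*} (f : H → H) (l : List (H → H)) (x : H) :
    applyList (f :: l) x = applyList l (f x) := rfl

section BBLAux

open RealInnerProductSpace

set_option linter.unusedSectionVars false

variable {H : Type*} [NormedAddCommGroup H] [InnerProductSpace ℝ H]

/-- Structural properties of the projection onto an affine subspace: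
affineness of differences, the Pythagorean identity for the linear part,
and orthogonality of residuals to fixed directions. -/
def GoodProj (P : H → H) : Prop :=
  (∀ x y, P x - P y = P (x - y) - P 0) ∧
  (∀ v, ‖P v - P 0‖ ^ 2 + ‖v - (P v - P 0)‖ ^ 2 = ‖v‖ ^ 2) ∧
  (∀ x v, P v - P 0 = v → ⟪x - P x, v⟫ = 0)

lemma goodProj_of_isProjOn (C : Set H) (V : AffineSubspace ℝ H)
    (hCV : C = (V : Set H)) (P : H → H) (hP : IsProjOn P C) : GoodProj P := by
  have hmem : ∀ x, P x ∈ C := fun x => (hP x).1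
  have haffC : ∀ (t : ℝ) (p₁ p₂ p₃ : H), p₁ ∈ C → p₂ ∈ C → p₃ ∈ C →
      t • (p₁ - p₂) + p₃ ∈ C := by
    subst hCV
    intro t p₁ p₂ p₃ h₁ h₂ h₃
    simpa using V.smul_vsub_vadd_mem t h₁ h₂ h₃
  -- orthogonality of the residual to the affine subspace
  have horth : ∀ x y, y ∈ C → ⟪x - P x, y - P x⟫ = 0 := by
    intro x y hy
    set p := P x with hp
    by_cases hyp : y = p
    · simp [hyp]
    set r : ℝ := ⟪x - p, y - p⟫ with hr
    have hsne : y - p ≠ 0 := sub_ne_zero.2 hyp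
    have hs : (0:ℝ) < ‖y - p‖ ^ 2 := pow_pos (norm_pos_iff.2 hsne) 2
    set t : ℝ := r / ‖y - p‖ ^ 2 with ht
    have hq : t • (y - p) + p ∈ C := haffC t y p p hy (hmem x) (hmem x)
    have hle : ‖x - p‖ ≤ ‖x - (t • (y - p) + p)‖ := (hP x).2 _ hq
    have hxq : x - (t • (y - p) + p) = (x - p) - t • (y - p) := by abel
    have hexp : ‖(x - p) - t • (y - p)‖ ^ 2
        = ‖x - p‖ ^ 2 - 2 * t * r + t ^ 2 * ‖y - p‖ ^ 2 := by
      rw [norm_sub_sq_real, real_inner_smul_right, norm_smul, Real.norm_eq_abs,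
        mul_pow, sq_abs]
      ring
    have hle2 : ‖x - p‖ ^ 2 ≤ ‖x - p‖ ^ 2 - 2 * t * r + t ^ 2 * ‖y - p‖ ^ 2 := by
      calc ‖x - p‖ ^ 2 ≤ ‖x - (t • (y - p) + p)‖ ^ 2 :=
            pow_le_pow_left₀ (norm_nonneg _) hle 2
        _ = _ := by rw [hxq, hexp]
    have hkey : 0 ≤ -2 * t * r + t ^ 2 * ‖y - p‖ ^ 2 := by linarith
    have hsne' : ‖y - p‖ ^ 2 ≠ 0 := ne_of_gt hs
    have heq : -2 * t * r + t ^ 2 * ‖y - p‖ ^ 2 = -(r ^ 2) / ‖y - p‖ ^ 2 := by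
      rw [ht]; field_simp; ring
    rw [heq] at hkey
    rw [neg_div] at hkey
    have hr2 : r ^ 2 / ‖y - p‖ ^ 2 ≤ 0 := by linarith
    have hr2' : r ^ 2 ≤ 0 := by
      have h := mul_nonpos_of_nonpos_of_nonneg hr2 (le_of_lt hs)
      rwa [div_mul_cancel₀ _ hsne'] at h
    have hrz : r ^ 2 = 0 := le_antisymm hr2' (sq_nonneg r)
    exact (pow_eq_zero_iff two_ne_zero).1 hrz
  -- residuals are orthogonal to all differences of points of C
  have hdiffs : ∀ (x : H) (y₁ y₂ : H), y₁ ∈ C → y₂ ∈ C → ⟪x - P x, y₁ - y₂⟫ = 0 := by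
    intro x y₁ y₂ h₁ h₂
    have e : y₁ - y₂ = (y₁ - P x) - (y₂ - P x) := by abel
    rw [e, inner_sub_right, horth x y₁ h₁, horth x y₂ h₂]
    ring
  -- uniqueness characterization
  have hchar : ∀ x p, p ∈ C → (∀ y ∈ C, ⟪x - p, y - p⟫ = 0) → P x = p := by
    intro x p hpC hperp
    have h1 : ⟪x - p, P x - p⟫ = 0 := hperp _ (hmem x)
    have h2 : ⟪x - P x, p - P x⟫ = 0 := horth x p hpC
    have h2' : ⟪x - P x, P x - p⟫ = (0:ℝ) := by
      rw [show P x - p = -(p - P x) by abel, inner_neg_right, h2]; ring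
    have h3 : ⟪P x - p, P x - p⟫ = (0:ℝ) := by
      have e : ⟪x - p, P x - p⟫ - ⟪x - P x, P x - p⟫ = ⟪P x - p, P x - p⟫ := by
        rw [← inner_sub_left]; congr 1; abel
      rw [← e, h1, h2']; ring
    have := inner_self_eq_zero.1 h3
    exact sub_eq_zero.1 this
  have hadd' : ∀ a b, P (a + b) = P a + P b - P 0 := by
    intro a b
    have hmem3 : P a + P b - P 0 ∈ C := by
      have h := haffC 1 (P a) (P 0) (P b) (hmem a) (hmem 0) (hmem b)
      rw [one_smul] at h
      have e : P a - P 0 + P b = P a + P b - P 0 := by abel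
      rwa [e] at h
    apply hchar _ _ hmem3
    intro y hy
    have e : (a + b) - (P a + P b - P 0) = ((a - P a) + (b - P b)) - (0 - P 0) := by
      abel
    rw [e, inner_sub_left, inner_add_left,
      hdiffs a y (P a + P b - P 0) hy hmem3,
      hdiffs b y (P a + P b - P 0) hy hmem3,
      hdiffs 0 y (P a + P b - P 0) hy hmem3]
    ring
  have hdiff1 : ∀ x y, P x - P y = P (x - y) - P 0 := by
    intro x y
    have h := hadd' (x - y) y
    rw [sub_add_cancel] at h
    rw [h]; abel
  refine ⟨hdiff1, ?_, ?_⟩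
  · intro v
    have h1 := hdiffs v (P v) (P 0) (hmem v) (hmem 0)
    have h2 := hdiffs 0 (P v) (P 0) (hmem v) (hmem 0)
    have h0 : ⟪v - (P v - P 0), P v - P 0⟫ = (0:ℝ) := by
      have e : v - (P v - P 0) = (v - P v) - (0 - P 0) := by abel
      rw [e, inner_sub_left, h1, h2]; ring
    have hns := norm_add_sq_real (P v - P 0) (v - (P v - P 0))
    have habv : (P v - P 0) + (v - (P v - P 0)) = v := by abel
    rw [habv, real_inner_comm] at hns
    rw [h0] at hns
    linarith
  · intro x v hv
    have h := hdiffs x (P v) (P 0) (hmem v) (hmem 0)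
    rwa [hv] at h

lemma chain_props (l : List (H → H)) (hl : ∀ f ∈ l, GoodProj f) :
    (∀ x y, applyList l x - applyList l y = applyList l (x - y) - applyList l 0) ∧
    (∀ v, ‖applyList l v - applyList l 0‖ ≤ ‖v‖) ∧
    (∀ v, ‖v - (applyList l v - applyList l 0)‖ ^ 2
        ≤ (l.length : ℝ) * (‖v‖ ^ 2 - ‖applyList l v - applyList l 0‖ ^ 2)) ∧
    (∀ v, applyList l v - applyList l 0 = v → ∀ f ∈ l, f v - f 0 = v) := by
  induction l with
  | nil =>
    refine ⟨fun x y => by simp, fun v => by simp, fun v => by simp, fun v hv f hf => ?_⟩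
    exact absurd hf List.not_mem_nil
  | cons f l ih =>
    obtain ⟨hf1, hf2, hf3⟩ := hl f List.mem_cons_self
    obtain ⟨ih1, ih2, ih3, ih4⟩ := ih (fun g hg => hl g (List.mem_cons_of_mem f hg))
    have hπle : ∀ v, ‖f v - f 0‖ ≤ ‖v‖ := by
      intro v
      have h := hf2 v
      nlinarith [norm_nonneg (f v - f 0), norm_nonneg v, sq_nonneg ‖v - (f v - f 0)‖]
    have hD : ∀ v, applyList l (f v) - applyList l (f 0)
        = applyList l (f v - f 0) - applyList l 0 := by
      intro v
      rw [ih1 (f v) (f 0)]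
    have hc1 : ∀ x y, applyList (f :: l) x - applyList (f :: l) y
        = applyList (f :: l) (x - y) - applyList (f :: l) 0 := by
      intro x y
      simp only [applyList_cons]
      rw [ih1 (f x) (f y), hf1 x y, ← ih1 (f (x - y)) (f 0)]
    refine ⟨hc1, ?_, ?_, ?_⟩
    · intro v
      simp only [applyList_cons]
      rw [hD v]
      calc ‖applyList l (f v - f 0) - applyList l 0‖ ≤ ‖f v - f 0‖ := ih2 _
        _ ≤ ‖v‖ := hπle v
    · intro v
      simp only [applyList_cons, List.length_cons]
      rw [hD v]
      set w := f v - f 0 with hw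
      set Dw := applyList l w - applyList l 0 with hDw
      have ha2 : ‖v - w‖ ^ 2 = ‖v‖ ^ 2 - ‖w‖ ^ 2 := by
        have := hf2 v; linarith
      have hb2 : ‖w - Dw‖ ^ 2 ≤ (l.length : ℝ) * (‖w‖ ^ 2 - ‖Dw‖ ^ 2) := ih3 w
      have hBnn : 0 ≤ ‖w‖ ^ 2 - ‖Dw‖ ^ 2 := by
        have := ih2 w
        nlinarith [norm_nonneg Dw, norm_nonneg w]
      have htri : ‖v - Dw‖ ≤ ‖v - w‖ + ‖w - Dw‖ := by
        have e : v - Dw = (v - w) + (w - Dw) := by abel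
        rw [e]; exact norm_add_le _ _
      have hsq : ‖v - Dw‖ ^ 2 ≤ (‖v - w‖ + ‖w - Dw‖) ^ 2 :=
        pow_le_pow_left₀ (norm_nonneg _) htri 2
      push_cast
      rcases Nat.eq_zero_or_pos l.length with h0 | hpos
      · have hlen0 : (l.length : ℝ) = 0 := by exact_mod_cast h0
        rw [hlen0] at hb2
        have hb0 : ‖w - Dw‖ = 0 := by nlinarith [sq_nonneg ‖w - Dw‖, norm_nonneg (w - Dw)]
        have hwD : w - Dw = 0 := norm_eq_zero.1 hb0
        have hwD' : Dw = w := by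
          have := sub_eq_zero.1 hwD; exact this.symm
        rw [hlen0, hwD']
        nlinarith [ha2]
      · have hn1 : (1:ℝ) ≤ (l.length : ℝ) := by exact_mod_cast hpos
        set n : ℝ := (l.length : ℝ) with hn
        set a : ℝ := ‖v - w‖ with haa
        set b : ℝ := ‖w - Dw‖ with hbb
        set B : ℝ := ‖w‖ ^ 2 - ‖Dw‖ ^ 2 with hB
        have hn0 : (0:ℝ) < n := by linarith
        have hsqq := sq_nonneg (n * a - b)
        have h3 : n * (2 * (a * b)) ≤ n * (n * a ^ 2 + B) := by nlinarith [hb2]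
        have h4 : 2 * (a * b) ≤ n * a ^ 2 + B := le_of_mul_le_mul_left h3 hn0
        nlinarith [hsq, h4, hb2, ha2]
    · intro v hv g hg
      simp only [applyList_cons] at hv
      rw [hD v] at hv
      have h1 : ‖v‖ ≤ ‖f v - f 0‖ := by
        calc ‖v‖ = ‖applyList l (f v - f 0) - applyList l 0‖ := by rw [hv]
          _ ≤ _ := ih2 _
      have h2 : ‖f v - f 0‖ ≤ ‖v‖ := hπle v
      have heq : ‖f v - f 0‖ = ‖v‖ := le_antisymm h2 h1
      have h3 : ‖v - (f v - f 0)‖ ^ 2 = 0 := by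
        have := hf2 v; rw [heq] at this; linarith
      have h4 : f v - f 0 = v := by
        have h5 : ‖v - (f v - f 0)‖ = 0 := (pow_eq_zero_iff (two_ne_zero)).1 h3
        have h6 := norm_eq_zero.1 h5
        exact (sub_eq_zero.1 h6).symm
      rcases List.mem_cons.1 hg with rfl | hmem'
      · exact h4
      · exact ih4 v (by rwa [h4] at hv) g hmem'

lemma cauchy_orbit (c : ℝ) (Λ : H → H)
    (hadd : ∀ u v, Λ (u + v) = Λ u + Λ v)
    (hne : ∀ v, ‖Λ v‖ ≤ ‖v‖)
    (hreg : ∀ v, ‖v - Λ v‖ ^ 2 ≤ c * (‖v‖ ^ 2 - ‖Λ v‖ ^ 2))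
    (g : ℕ → H) (hg : ∀ n, g (n + 1) = Λ (g n)) : CauchySeq g := by
  set a : ℕ → ℝ := fun n => ‖g n‖ with ha_def
  have ha_anti : Antitone a := by
    apply antitone_nat_of_succ_le
    intro n
    simpa [ha_def, hg n] using hne (g n)
  have ha_bdd : BddBelow (Set.range a) := by
    refine ⟨0, ?_⟩
    rintro x ⟨n, rfl⟩
    exact norm_nonneg _
  set A : ℝ := ⨅ n, a n with hA_def
  have ha_lim : Tendsto a atTop (nhds A) := tendsto_atTop_ciInf ha_anti ha_bdd
  have hA_le : ∀ n, A ≤ a n := fun n => ciInf_le ha_bdd n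
  have hA0 : 0 ≤ A := le_ciInf fun n => norm_nonneg _
  have ha0 : ∀ n, 0 ≤ a n := fun n => norm_nonneg _
  have hsq_lim : Tendsto (fun n => a n ^ 2) atTop (nhds (A ^ 2)) := ha_lim.pow 2
  have hreg' : ∀ n, ‖g n - g (n + 1)‖ ^ 2 ≤ c * (a n ^ 2 - a (n + 1) ^ 2) := by
    intro n
    simpa [ha_def, hg n] using hreg (g n)
  have hdiff : Tendsto (fun n => ‖g n - g (n + 1)‖) atTop (nhds 0) := by
    have h1 : Tendsto (fun n => c * (a n ^ 2 - a (n + 1) ^ 2)) atTop (nhds 0) := by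
      have h2 := (hsq_lim.sub (hsq_lim.comp (tendsto_add_atTop_nat 1))).const_mul c
      simpa using h2
    have h2 : Tendsto (fun n => ‖g n - g (n + 1)‖ ^ 2) atTop (nhds 0) :=
      squeeze_zero (fun n => sq_nonneg _) hreg' h1
    have h3 := (Real.continuous_sqrt.tendsto 0).comp h2
    have h4 : (fun n => Real.sqrt (‖g n - g (n + 1)‖ ^ 2)) = fun n => ‖g n - g (n + 1)‖ :=
      funext fun n => Real.sqrt_sq (norm_nonneg _)
    rw [show ((fun x => Real.sqrt x) ∘ fun n => ‖g n - g (n + 1)‖ ^ 2)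
        = fun n => Real.sqrt (‖g n - g (n + 1)‖ ^ 2) from rfl, h4] at h3
    simpa using h3
  have hek : ∀ k, Tendsto (fun n => ‖g n - g (n + k)‖) atTop (nhds 0) := by
    intro k
    induction k with
    | zero => simpa using tendsto_const_nhds
    | succ k ihk =>
      have hb : Tendsto (fun n => ‖g n - g (n + k)‖ + ‖g (n + k) - g (n + k + 1)‖)
          atTop (nhds 0) := by
        have := ihk.add (hdiff.comp (tendsto_add_atTop_nat k))
        simpa using this
      refine squeeze_zero (fun n => norm_nonneg _) (fun n => ?_) hb
      have e : g n - g (n + (k + 1)) = (g n - g (n + k)) + (g (n + k) - g (n + k + 1)) := by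
        have h : n + (k + 1) = n + k + 1 := by omega
        rw [h]; abel
      rw [e]
      exact norm_add_le _ _
  have hd_anti : ∀ k, Antitone (fun n => ‖g n + g (n + k)‖) := by
    intro k
    apply antitone_nat_of_succ_le
    intro n
    have hidx : n + 1 + k = (n + k) + 1 := by omega
    have e : g (n + 1) + g (n + 1 + k) = Λ (g n + g (n + k)) := by
      rw [hidx, hg, hg, hadd]
    calc ‖g (n + 1) + g (n + 1 + k)‖ = ‖Λ (g n + g (n + k))‖ := by rw [e]
      _ ≤ ‖g n + g (n + k)‖ := hne _
  have hd_ge : ∀ n k, 2 * A ≤ ‖g n + g (n + k)‖ := by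
    intro n k
    have hlim : Tendsto (fun m => 2 * a m - ‖g m - g (m + k)‖) atTop (nhds (2 * A)) := by
      have := (ha_lim.const_mul 2).sub (hek k)
      simpa using this
    refine le_of_tendsto hlim ?_
    filter_upwards [eventually_ge_atTop n] with m hm
    have h1 : ‖g m + g (m + k)‖ ≤ ‖g n + g (n + k)‖ := hd_anti k hm
    have h2 : 2 * a m ≤ ‖g m + g (m + k)‖ + ‖g m - g (m + k)‖ := by
      have hx : (g m + g (m + k)) + (g m - g (m + k)) = (2 : ℝ) • g m := by module
      have hy : (2:ℝ) * a m = ‖(g m + g (m + k)) + (g m - g (m + k))‖ := by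
        rw [hx, norm_smul]
        simp [ha_def]
      rw [hy]
      exact norm_add_le _ _
    linarith
  have hbound : ∀ n k, ‖g n - g (n + k)‖ ^ 2 ≤ 4 * (a n ^ 2 - A ^ 2) := by
    intro n k
    have hpar := parallelogram_law_with_norm ℝ (g n) (g (n + k))
    have h1 := hd_ge n k
    have h2 : a (n + k) ≤ a n := ha_anti (Nat.le_add_right n k)
    have h3 : A ≤ a n := hA_le n
    have h0 : 0 ≤ ‖g n + g (n + k)‖ := norm_nonneg _
    nlinarith [hpar, h1, h2, h3, hA0, ha0 (n + k)]
  refine Metric.cauchySeq_iff'.2 fun ε hε => ?_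
  have hev : ∀ᶠ n in atTop, a n ^ 2 < A ^ 2 + ε ^ 2 / 8 := by
    apply hsq_lim.eventually_lt_const
    nlinarith [hε]
  obtain ⟨N₀, hN₀⟩ := hev.exists_forall_of_atTop
  refine ⟨N₀, fun n hn => ?_⟩
  obtain ⟨k, rfl⟩ := Nat.exists_eq_add_of_le hn
  rw [dist_eq_norm, ← norm_neg]
  have e : -(g (N₀ + k) - g N₀) = g N₀ - g (N₀ + k) := by abel
  rw [e]
  have hb := hbound N₀ k
  have h4 : ‖g N₀ - g (N₀ + k)‖ ^ 2 < ε ^ 2 := by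
    have := hN₀ N₀ le_rfl
    nlinarith
  exact lt_of_pow_lt_pow_left₀ 2 (le_of_lt hε) h4

end BBLAux

lemma orbit_rep {H : Type*} {N : ℕ} [NeZero N] (P : Fin N → H → H) (u : ℕ → H)
    (hu : ∀ k : ℕ, u (k + 1) =
      P ⟨k % N, Nat.mod_lt k (Nat.pos_of_ne_zero (NeZero.ne N))⟩ (u k)) :
    ∀ (m s : ℕ), u (s + m) = applyList
      (List.ofFn (fun t : Fin m =>
        P ⟨(s + (t : ℕ)) % N, Nat.mod_lt _ (Nat.pos_of_ne_zero (NeZero.ne N))⟩)) (u s) := by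
  intro m
  induction m with
  | zero => intro s; simp [applyList]
  | succ m ih =>
    intro s
    rw [List.ofFn_succ, applyList_cons]
    have hidx : s + (m + 1) = (s + 1) + m := by omega
    rw [hidx, ih (s + 1)]
    have hbase : P (⟨(s + ((0 : Fin (m + 1)) : ℕ)) % N,
        Nat.mod_lt _ (Nat.pos_of_ne_zero (NeZero.ne N))⟩ : Fin N) (u s) = u (s + 1) := by
      rw [hu s]
      have hv : ((0 : Fin (m + 1)) : ℕ) = 0 := rfl
      have h : (s + ((0 : Fin (m + 1)) : ℕ)) % N = s % N := by rw [hv]; simp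
      exact congrFun (congrArg P (Fin.ext h)) (u s)
    rw [hbase]
    have hfun : (fun t : Fin m => P (⟨(s + 1 + (t : ℕ)) % N,
          Nat.mod_lt _ (Nat.pos_of_ne_zero (NeZero.ne N))⟩ : Fin N))
        = (fun t : Fin m => P (⟨(s + ((t.succ : Fin (m + 1)) : ℕ)) % N,
          Nat.mod_lt _ (Nat.pos_of_ne_zero (NeZero.ne N))⟩ : Fin N)) := by
      funext t
      apply congrArg P
      apply Fin.ext
      show (s + 1 + (t : ℕ)) % N = (s + ((t : ℕ) + 1)) % N
      have h : s + 1 + (t : ℕ) = s + ((t : ℕ) + 1) := by omega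
      rw [h]
    rw [hfun]

lemma fin_cyc_val {N : ℕ} [NeZero N] (i t : Fin N) (n : ℕ) :
    (⟨(n * N + (i : ℕ) + 1 + (t : ℕ)) % N,
      Nat.mod_lt _ (Nat.pos_of_ne_zero (NeZero.ne N))⟩ : Fin N) = i + 1 + t := by
  apply Fin.ext
  show (n * N + (i : ℕ) + 1 + (t : ℕ)) % N = ((i + 1 + t : Fin N) : ℕ)
  have h1 : n * N + (i : ℕ) + 1 + (t : ℕ) = N * n + ((i : ℕ) + 1 + (t : ℕ)) := by ring
  rw [h1, Nat.mul_add_mod]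
  rw [Fin.add_def, Fin.add_def, Fin.val_one']
  show ((i : ℕ) + 1 + (t : ℕ)) % N = (((i : ℕ) + 1 % N) % N + (t : ℕ)) % N
  rw [Nat.mod_add_mod]
  exact (Nat.ModEq.add_right (t : ℕ) (Nat.ModEq.add_left (i : ℕ) (Nat.mod_modEq 1 N))).symm

lemma fin_surj {N : ℕ} [NeZero N] (i k : Fin N) : ∃ j : Fin N, i + 1 + j = k :=
  ⟨k - (i + 1), add_sub_cancel (i + 1) k⟩

open RealInnerProductSpace in
/-- Bauschke–Borwein–Lewis: for cyclic projections onto closed affine subspaces, if each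
composite operator `Q_i` has a fixed point then each subsequence `(x_iⁿ)ₙ` converges in
norm to the fixed point of `Q_i` nearest to the starting point `x⁰`.  Here
`u (k+1) = P_{k mod N} (u k)` and `x_iⁿ` corresponds to `u (n·N + i + 1)`. -/
theorem stmt10 {H : Type*} [NormedAddCommGroup H] [InnerProductSpace ℝ H] [CompleteSpace H]
    {N : ℕ} [NeZero N]
    (C : Fin N → Set H)
    (haff : ∀ i, ∃ V : AffineSubspace ℝ H,
      (V : Set H).Nonempty ∧ IsClosed (V : Set H) ∧ C i = (V : Set H))
    (P : Fin N → H → H) (hP : ∀ i, IsProjOn (P i) (C i))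
    (x0 : H) (u : ℕ → H) (hu0 : u 0 = x0)
    (hu : ∀ k : ℕ, u (k + 1) =
      P ⟨k % N, Nat.mod_lt k (Nat.pos_of_ne_zero (NeZero.ne N))⟩ (u k))
    (hfix : ∀ i : Fin N, ∃ z : H, cycOp P i z = z) :
    ∀ i : Fin N, ∃ z : H, cycOp P i z = z ∧
      (∀ w : H, cycOp P i w = w → ‖x0 - z‖ ≤ ‖x0 - w‖) ∧
      Tendsto (fun n : ℕ => u (n * N + (i : ℕ) + 1)) atTop (nhds z) := by
  intro i
  have hgood : ∀ k : Fin N, GoodProj (P k) := by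
    intro k
    obtain ⟨V, _, _, hCV⟩ := haff k
    exact goodProj_of_isProjOn (C k) V hCV (P k) (hP k)
  set l : List (H → H) := List.ofFn (fun j : Fin N => P (i + 1 + j)) with hl_def
  have hlg : ∀ f ∈ l, GoodProj f := by
    intro f hf
    rw [hl_def, List.mem_ofFn] at hf
    obtain ⟨j, hj⟩ := hf
    rw [← hj]
    exact hgood _
  obtain ⟨hc1, hc2, hc3, hc4⟩ := chain_props l hlg
  have hlen : l.length = N := by rw [hl_def]; simp
  have hΛadd : ∀ a b : H, (applyList l (a + b) - applyList l 0)
      = (applyList l a - applyList l 0) + (applyList l b - applyList l 0) := by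
    intro a b
    have h1 := hc1 (a + b) b
    have h2 : a + b - b = a := by abel
    rw [h2] at h1
    have h3 : applyList l (a + b) - applyList l 0
        = (applyList l (a + b) - applyList l b) + (applyList l b - applyList l 0) := by abel
    rw [h3, h1]
  have hreg' : ∀ v : H, ‖v - (applyList l v - applyList l 0)‖ ^ 2
      ≤ (N : ℝ) * (‖v‖ ^ 2 - ‖applyList l v - applyList l 0‖ ^ 2) := by
    intro v
    have h := hc3 v
    rwa [hlen] at h
  have hyrec : ∀ n : ℕ, u ((n + 1) * N + (i : ℕ) + 1)
      = applyList l (u (n * N + (i : ℕ) + 1)) := by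
    intro n
    have key := orbit_rep P u hu N (n * N + (i : ℕ) + 1)
    have hidx : (n + 1) * N + (i : ℕ) + 1 = (n * N + (i : ℕ) + 1) + N := by ring
    rw [hidx, key]
    have hlist : (List.ofFn (fun t : Fin N =>
        P ⟨(n * N + (i : ℕ) + 1 + (t : ℕ)) % N,
          Nat.mod_lt _ (Nat.pos_of_ne_zero (NeZero.ne N))⟩)) = l := by
      rw [hl_def]
      congr 1
      funext t
      exact congrArg P (fin_cyc_val i t n)
    rw [hlist]
  obtain ⟨f₀, hf₀⟩ := hfix i
  have hf₀' : applyList l f₀ = f₀ := hf₀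
  set g : ℕ → H := fun n => u (n * N + (i : ℕ) + 1) - f₀ with hg_def
  have hgrec : ∀ n, g (n + 1) = applyList l (g n) - applyList l 0 := by
    intro n
    show u ((n + 1) * N + (i : ℕ) + 1) - f₀
        = applyList l (u (n * N + (i : ℕ) + 1) - f₀) - applyList l 0
    rw [hyrec n]
    have h := hc1 (u (n * N + (i : ℕ) + 1)) f₀
    rwa [hf₀'] at h
  have hcau : CauchySeq g :=
    cauchy_orbit (N : ℝ) (fun v => applyList l v - applyList l 0)
      hΛadd hc2 hreg' g hgrec
  obtain ⟨w, hw⟩ := cauchySeq_tendsto_of_complete hcau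
  have hyten : Tendsto (fun n : ℕ => u (n * N + (i : ℕ) + 1)) atTop (nhds (w + f₀)) := by
    have h := hw.add_const f₀
    have e : (fun n => g n + f₀) = fun n : ℕ => u (n * N + (i : ℕ) + 1) := by
      funext n
      show u (n * N + (i : ℕ) + 1) - f₀ + f₀ = u (n * N + (i : ℕ) + 1)
      abel
    rwa [e] at h
  have hΛlip : ∀ a b : H, ‖(applyList l a - applyList l 0)
      - (applyList l b - applyList l 0)‖ ≤ ‖a - b‖ := by
    intro a b
    have e : (applyList l a - applyList l 0) - (applyList l b - applyList l 0)
        = applyList l a - applyList l b := by abel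
    rw [e, hc1 a b]
    exact hc2 _
  have hΛw : applyList l w - applyList l 0 = w := by
    have h0 : Tendsto (fun n => ‖g n - w‖) atTop (nhds 0) :=
      tendsto_iff_norm_sub_tendsto_zero.1 hw
    have h1 : Tendsto (fun n => applyList l (g n) - applyList l 0) atTop
        (nhds (applyList l w - applyList l 0)) := by
      rw [tendsto_iff_norm_sub_tendsto_zero]
      exact squeeze_zero (fun n => norm_nonneg _) (fun n => hΛlip (g n) w) h0
    have h3 := hw.comp (tendsto_add_atTop_nat 1)
    have h4 : (g ∘ fun n => n + 1) = fun n => applyList l (g n) - applyList l 0 :=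
      funext fun n => hgrec n
    rw [h4] at h3
    exact tendsto_nhds_unique h1 h3
  have hQfix : applyList l (w + f₀) = w + f₀ := by
    have h := hc1 (w + f₀) f₀
    rw [hf₀'] at h
    have e : w + f₀ - f₀ = w := by abel
    rw [e, hΛw] at h
    exact sub_eq_iff_eq_add.1 h
  refine ⟨w + f₀, hQfix, ?_, hyten⟩
  intro w' hw'
  have hw'' : applyList l w' = w' := hw'
  have hΛv : applyList l ((w + f₀) - w') - applyList l 0 = (w + f₀) - w' := by
    have h := hc1 (w + f₀) w'
    rw [hQfix, hw''] at h
    exact h.symm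
  have hfixall : ∀ k : Fin N, P k ((w + f₀) - w') - P k 0 = (w + f₀) - w' := by
    intro k
    obtain ⟨j, hj⟩ := fin_surj i k
    refine hc4 _ hΛv (P k) ?_
    rw [hl_def, List.mem_ofFn]
    exact ⟨j, by show P (i + 1 + j) = P k; rw [hj]⟩
  have hperp : ∀ (x : H) (k : Fin N), ⟪x - P k x, (w + f₀) - w'⟫ = (0:ℝ) := fun x k =>
    (hgood k).2.2 x _ (hfixall k)
  have hum : ∀ m : ℕ, ⟪u m - x0, (w + f₀) - w'⟫ = (0:ℝ) := by
    intro m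
    induction m with
    | zero => rw [hu0]; simp
    | succ m ihm =>
      have e : u (m + 1) - x0
          = -(u m - P ⟨m % N, Nat.mod_lt m (Nat.pos_of_ne_zero (NeZero.ne N))⟩ (u m))
            + (u m - x0) := by
        rw [hu m]; abel
      rw [e, inner_add_left, inner_neg_left, hperp, ihm]
      ring
  have hzv : ⟪(w + f₀) - x0, (w + f₀) - w'⟫ = (0:ℝ) := by
    have h1 : Tendsto (fun n : ℕ => ⟪u (n * N + (i : ℕ) + 1) - x0, (w + f₀) - w'⟫)
        atTop (nhds ⟪(w + f₀) - x0, (w + f₀) - w'⟫) :=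
      (hyten.sub tendsto_const_nhds).inner tendsto_const_nhds
    have h2 : (fun n : ℕ => ⟪u (n * N + (i : ℕ) + 1) - x0, (w + f₀) - w'⟫)
        = fun _ => (0:ℝ) := funext fun n => hum _
    rw [h2] at h1
    exact tendsto_nhds_unique h1 tendsto_const_nhds
  have hinner : ⟪x0 - (w + f₀), (w + f₀) - w'⟫ = (0:ℝ) := by
    rw [show x0 - (w + f₀) = -((w + f₀) - x0) by abel, inner_neg_left, hzv]
    ring
  have hns := norm_add_sq_real (x0 - (w + f₀)) ((w + f₀) - w')
  have hdec : (x0 - (w + f₀)) + ((w + f₀) - w') = x0 - w' := by abel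
  rw [hdec, hinner] at hns
  nlinarith [norm_nonneg (x0 - (w + f₀)), norm_nonneg (x0 - w'),
    sq_nonneg ‖(w + f₀) - w'‖]
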